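/- Let T be the rooted symmetric tree with daughter degree sequence (k_1, k_2), let f be the graceful labelling of Theorem 1 (which assigns 0 to the root), and let h_2 = 1 + k_2. Then applying the permutation of labels that swaps j·h_2 with j·h_2 + k_2 for each j = 0, 1, ..., k_1 - 1 (fixing all other labels) to the vertex labels of f yields another graceful labelling of T, which assigns label 0 to a vertex at level 3. -/
import Mathlib


/-- A graceful labelling of a graph `G` on a finite vertex type: `f` is an injection into
`{0, ..., |V| - 1}` and the induced edge labels `|f u - f v|` are pairwise distinct. -/
def IsGraceful {V : Type*} [Fintype V] (G : SimpleGraph V) (f : V → ℕ) : Prop :=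
  Function.Injective f ∧ (∀ v, f v < Fintype.card V) ∧
    ∀ u v u' v', G.Adj u v → G.Adj u' v' →
      ((f u : ℤ) - (f v : ℤ)).natAbs = ((f u' : ℤ) - (f v' : ℤ)).natAbs →
      s(u, v) = s(u', v')


open scoped Classical

/-- The rooted symmetric tree with daughter degree sequence `(k₁, k₂)`: `none` is the
root, `some (i, none)` are the `k₁` level-2 vertices, and `some (i, some j)` are the
level-3 leaves under the level-2 vertex `i`. -/
def rst3 (k₁ k₂ : ℕ) : SimpleGraph (Option (Fin k₁ × Option (Fin k₂))) :=
  SimpleGraph.fromRel (fun u v =>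
    (u = none ∧ ∃ i, v = some (i, none)) ∨
    (∃ i j, u = some (i, none) ∧ v = some (i, some j)))

/-- The labelling of Theorem 1 for the `(k₁, k₂)` rooted symmetric tree (with
`h₂ = 1 + k₂`): root ↦ `0`, level-2 vertex `x₁` ↦ `(k₁ - x₁) * h₂`, level-3 vertex
`(x₁, x₂)` ↦ `x₁ * h₂ + x₂ + 1`. -/
def rstLabel (k₁ k₂ : ℕ) : Option (Fin k₁ × Option (Fin k₂)) → ℕ
  | none => 0
  | some (i, none) => (k₁ - (i : ℕ)) * (1 + k₂)
  | some (i, some j) => (i : ℕ) * (1 + k₂) + (j : ℕ) + 1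

/-- The permutation of labels which, for each `j = 0, 1, ..., k₁ - 1`, swaps the label
`j * h₂` with `j * h₂ + k₂` (where `h₂ = 1 + k₂`) and fixes all other labels. -/
noncomputable def swapPerm (k₁ k₂ : ℕ) (m : ℕ) : ℕ :=
  if ∃ j < k₁, m = j * (1 + k₂) then m + k₂
  else if ∃ j < k₁, m = j * (1 + k₂) + k₂ then m - k₂
  else m

/- ======== auxiliary ======== -/

lemma rep_unique {n a b r s : ℕ} (hr : r < n) (hs : s < n)
    (e : a * n + r = b * n + s) : a = b ∧ r = s := by
  have h1 : (a * n + r) % n = r := by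
    rw [Nat.add_comm, Nat.add_mul_mod_self_right, Nat.mod_eq_of_lt hr]
  have h2 : (b * n + s) % n = s := by
    rw [Nat.add_comm, Nat.add_mul_mod_self_right, Nat.mod_eq_of_lt hs]
  have hrs : r = s := by rw [← h1, ← h2, e]
  refine ⟨?_, hrs⟩
  have : a * n = b * n := by omega
  exact Nat.eq_of_mul_eq_mul_right (by omega) this

lemma swap_mul {k₁ k₂ j : ℕ} (hj : j < k₁) :
    swapPerm k₁ k₂ (j * (1 + k₂)) = j * (1 + k₂) + k₂ := by
  rw [swapPerm, if_pos ⟨j, hj, rfl⟩]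

lemma swap_addk {k₁ k₂ j : ℕ} (hj : j < k₁) (hk₂ : 1 ≤ k₂) :
    swapPerm k₁ k₂ (j * (1 + k₂) + k₂) = j * (1 + k₂) := by
  have hne : ¬ ∃ j' < k₁, j * (1 + k₂) + k₂ = j' * (1 + k₂) := by
    rintro ⟨j', _, e⟩
    have e' : j' * (1 + k₂) + 0 = j * (1 + k₂) + k₂ := by omega
    have := rep_unique (n := 1 + k₂) (by omega) (by omega) e'
    omega
  rw [swapPerm, if_neg hne, if_pos ⟨j, hj, rfl⟩]
  omega

lemma swap_fix {k₁ k₂ m : ℕ}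
    (h1 : ¬ ∃ j < k₁, m = j * (1 + k₂)) (h2 : ¬ ∃ j < k₁, m = j * (1 + k₂) + k₂) :
    swapPerm k₁ k₂ m = m := by
  rw [swapPerm, if_neg h1, if_neg h2]

lemma swap_mid {k₁ k₂ i r : ℕ} (hr1 : 1 ≤ r) (hr2 : r < k₂) :
    swapPerm k₁ k₂ (i * (1 + k₂) + r) = i * (1 + k₂) + r := by
  apply swap_fix
  · rintro ⟨j, _, e⟩
    have e' : j * (1 + k₂) + 0 = i * (1 + k₂) + r := by omega
    have := rep_unique (n := 1 + k₂) (by omega) (by omega) e'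
    omega
  · rintro ⟨j, _, e⟩
    have e' : j * (1 + k₂) + k₂ = i * (1 + k₂) + r := by omega
    have := rep_unique (n := 1 + k₂) (by omega) (by omega) e'
    omega

lemma swap_topfix {k₁ k₂ : ℕ} (hk₂ : 1 ≤ k₂) :
    swapPerm k₁ k₂ (k₁ * (1 + k₂)) = k₁ * (1 + k₂) := by
  apply swap_fix
  · rintro ⟨j, hj, e⟩
    have e' : k₁ * (1 + k₂) + 0 = j * (1 + k₂) + 0 := by omega
    have := rep_unique (n := 1 + k₂) (by omega) (by omega) e'
    omega
  · rintro ⟨j, hj, e⟩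
    have e' : k₁ * (1 + k₂) + 0 = j * (1 + k₂) + k₂ := by omega
    have := rep_unique (n := 1 + k₂) (by omega) (by omega) e'
    omega

lemma swap_invol (k₁ k₂ : ℕ) (hk₂ : 1 ≤ k₂) (m : ℕ) :
    swapPerm k₁ k₂ (swapPerm k₁ k₂ m) = m := by
  by_cases h1 : ∃ j < k₁, m = j * (1 + k₂)
  · obtain ⟨j, hj, rfl⟩ := h1
    rw [swap_mul hj, swap_addk hj hk₂]
  · by_cases h2 : ∃ j < k₁, m = j * (1 + k₂) + k₂
    · obtain ⟨j, hj, rfl⟩ := h2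
      rw [swap_addk hj hk₂, swap_mul hj]
    · rw [swap_fix h1 h2, swap_fix h1 h2]

/-- explicit formulas for the swapped labelling -/
lemma gl_root {k₁ k₂ : ℕ} (hk₁ : 1 ≤ k₁) :
    swapPerm k₁ k₂ (rstLabel k₁ k₂ none) = k₂ := by
  have h0 : rstLabel k₁ k₂ none = 0 * (1 + k₂) := by rw [rstLabel]; ring
  rw [h0, swap_mul (show 0 < k₁ by omega)]
  ring

lemma gl_mid {k₁ k₂ : ℕ} (hk₂ : 1 ≤ k₂) (i : Fin k₁) :
    swapPerm k₁ k₂ (rstLabel k₁ k₂ (some (i, none))) =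
      if (i : ℕ) = 0 then k₁ * (1 + k₂) else (k₁ - (i : ℕ)) * (1 + k₂) + k₂ := by
  have hi := i.isLt
  rw [rstLabel]
  split
  · next h => rw [h, Nat.sub_zero, swap_topfix hk₂]
  · next h => exact swap_mul (by omega)

lemma gl_leaf {k₁ k₂ : ℕ} (hk₂ : 1 ≤ k₂) (i : Fin k₁) (j : Fin k₂) :
    swapPerm k₁ k₂ (rstLabel k₁ k₂ (some (i, some j))) =
      if (j : ℕ) = k₂ - 1 then (i : ℕ) * (1 + k₂) else (i : ℕ) * (1 + k₂) + (j : ℕ) + 1 := by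
  have hi := i.isLt
  have hj := j.isLt
  rw [rstLabel]
  split
  · next h =>
    have : (i : ℕ) * (1 + k₂) + (j : ℕ) + 1 = (i : ℕ) * (1 + k₂) + k₂ := by omega
    rw [this, swap_addk hi hk₂]
  · next h =>
    have : (i : ℕ) * (1 + k₂) + (j : ℕ) + 1 = (i : ℕ) * (1 + k₂) + ((j : ℕ) + 1) := by omega
    rw [this, swap_mid (by omega) (by omega)]

/- ======== edges ======== -/

def eSrc {k₁ k₂ : ℕ} : Fin k₁ ⊕ Fin k₁ × Fin k₂ → Option (Fin k₁ × Option (Fin k₂))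
  | .inl _ => none
  | .inr (i, _) => some (i, none)

def eDst {k₁ k₂ : ℕ} : Fin k₁ ⊕ Fin k₁ × Fin k₂ → Option (Fin k₁ × Option (Fin k₂))
  | .inl i => some (i, none)
  | .inr (i, j) => some (i, some j)

def phi {k₁ k₂ : ℕ} (hk₂ : 1 ≤ k₂) :
    Fin k₁ ⊕ Fin k₁ × Fin k₂ → Fin k₁ ⊕ Fin k₁ × Fin k₂
  | .inl i => if (i : ℕ) = 0 then .inr (i, ⟨k₂ - 1, by omega⟩) else .inl i
  | .inr (i, j) =>
      if h : (i : ℕ) = 0 then (if (j : ℕ) = k₂ - 1 then .inl i else .inr (i, j))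
      else .inr (⟨k₁ - (i : ℕ), by have := i.isLt; omega⟩,
        if (j : ℕ) = k₂ - 1 then j else ⟨k₂ - 2 - (j : ℕ), by omega⟩)

lemma phi_inl_zero {k₁ k₂ : ℕ} (hk₂ : 1 ≤ k₂) (i : Fin k₁) (h : (i : ℕ) = 0) :
    phi hk₂ (Sum.inl i) = Sum.inr (i, ⟨k₂ - 1, by omega⟩) := by
  rw [phi, if_pos h]

lemma phi_inl_pos {k₁ k₂ : ℕ} (hk₂ : 1 ≤ k₂) (i : Fin k₁) (h : ¬ (i : ℕ) = 0) :
    phi hk₂ (Sum.inl i) = Sum.inl i := by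
  rw [phi, if_neg h]

lemma phi_inr_zero_last {k₁ k₂ : ℕ} (hk₂ : 1 ≤ k₂) (i : Fin k₁) (j : Fin k₂)
    (h : (i : ℕ) = 0) (h2 : (j : ℕ) = k₂ - 1) :
    phi hk₂ (Sum.inr (i, j)) = Sum.inl i := by
  rw [phi, dif_pos h, if_pos h2]

lemma phi_inr_zero_mid {k₁ k₂ : ℕ} (hk₂ : 1 ≤ k₂) (i : Fin k₁) (j : Fin k₂)
    (h : (i : ℕ) = 0) (h2 : ¬ (j : ℕ) = k₂ - 1) :
    phi hk₂ (Sum.inr (i, j)) = Sum.inr (i, j) := by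
  rw [phi, dif_pos h, if_neg h2]

lemma phi_inr_pos_last {k₁ k₂ : ℕ} (hk₂ : 1 ≤ k₂) (i : Fin k₁) (j : Fin k₂)
    (h : ¬ (i : ℕ) = 0) (h2 : (j : ℕ) = k₂ - 1) :
    phi hk₂ (Sum.inr (i, j)) = Sum.inr (⟨k₁ - (i : ℕ), by have := i.isLt; omega⟩, j) := by
  rw [phi, dif_neg h, if_pos h2]

lemma phi_inr_pos_mid {k₁ k₂ : ℕ} (hk₂ : 1 ≤ k₂) (i : Fin k₁) (j : Fin k₂)
    (h : ¬ (i : ℕ) = 0) (h2 : ¬ (j : ℕ) = k₂ - 1) :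
    phi hk₂ (Sum.inr (i, j)) =
      Sum.inr (⟨k₁ - (i : ℕ), by have := i.isLt; omega⟩,
        ⟨k₂ - 2 - (j : ℕ), by have := j.isLt; omega⟩) := by
  rw [phi, dif_neg h, if_neg h2]

lemma phi_phi {k₁ k₂ : ℕ} (hk₂ : 1 ≤ k₂) (e : Fin k₁ ⊕ Fin k₁ × Fin k₂) :
    phi hk₂ (phi hk₂ e) = e := by
  rcases e with i | ⟨i, j⟩
  · have hi := i.isLt
    by_cases h : (i : ℕ) = 0
    · rw [phi_inl_zero hk₂ i h, phi_inr_zero_last hk₂ i _ h (by simp)]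
    · rw [phi_inl_pos hk₂ i h, phi_inl_pos hk₂ i h]
  · have hi := i.isLt
    have hj := j.isLt
    by_cases h : (i : ℕ) = 0
    · by_cases h2 : (j : ℕ) = k₂ - 1
      · rw [phi_inr_zero_last hk₂ i j h h2, phi_inl_zero hk₂ i h]
        congr 1
        exact Prod.ext rfl (Fin.ext (by simp [h2]))
      · rw [phi_inr_zero_mid hk₂ i j h h2, phi_inr_zero_mid hk₂ i j h h2]
    · by_cases h2 : (j : ℕ) = k₂ - 1
      · rw [phi_inr_pos_last hk₂ i j h h2,
          phi_inr_pos_last hk₂ _ j (by simp; omega) h2]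
        congr 1
        exact Prod.ext (Fin.ext (by simp; omega)) rfl
      · rw [phi_inr_pos_mid hk₂ i j h h2,
          phi_inr_pos_mid hk₂ _ _ (by simp; omega) (by simp; omega)]
        congr 1
        exact Prod.ext (Fin.ext (by simp; omega)) (Fin.ext (by simp; omega))

lemma adj_src_dst {k₁ k₂ : ℕ} (hk₂ : 1 ≤ k₂) (e : Fin k₁ ⊕ Fin k₁ × Fin k₂) :
    (rst3 k₁ k₂).Adj (eSrc e) (eDst e) := by
  rcases e with i | ⟨i, j⟩ <;>
    simp [rst3, eSrc, eDst, SimpleGraph.fromRel_adj]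

lemma adj_cases {k₁ k₂ : ℕ} {u v : Option (Fin k₁ × Option (Fin k₂))}
    (h : (rst3 k₁ k₂).Adj u v) :
    ∃ e : Fin k₁ ⊕ Fin k₁ × Fin k₂,
      (u = eSrc e ∧ v = eDst e) ∨ (u = eDst e ∧ v = eSrc e) := by
  rw [rst3, SimpleGraph.fromRel_adj] at h
  obtain ⟨-, h | h⟩ := h
  · rcases h with ⟨rfl, i, rfl⟩ | ⟨i, j, rfl, rfl⟩
    · exact ⟨.inl i, Or.inl ⟨rfl, rfl⟩⟩
    · exact ⟨.inr (i, j), Or.inl ⟨rfl, rfl⟩⟩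
  · rcases h with ⟨rfl, i, rfl⟩ | ⟨i, j, rfl, rfl⟩
    · exact ⟨.inl i, Or.inr ⟨rfl, rfl⟩⟩
    · exact ⟨.inr (i, j), Or.inr ⟨rfl, rfl⟩⟩

lemma sym2_inj {k₁ k₂ : ℕ} {e e' : Fin k₁ ⊕ Fin k₁ × Fin k₂}
    (h : s(eSrc e, eDst e) = s(eSrc e', eDst e')) : e = e' := by
  rcases e with i | ⟨i, j⟩ <;> rcases e' with i' | ⟨i', j'⟩ <;>
    simp_all [eSrc, eDst, Sym2.eq_iff, Prod.ext_iff]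

/- ======== the transfer lemma ======== -/

lemma edge_transfer {k₁ k₂ : ℕ} (hk₁ : 1 ≤ k₁) (hk₂ : 1 ≤ k₂)
    (e : Fin k₁ ⊕ Fin k₁ × Fin k₂) :
    ((swapPerm k₁ k₂ (rstLabel k₁ k₂ (eSrc e)) : ℤ) -
      (swapPerm k₁ k₂ (rstLabel k₁ k₂ (eDst e)) : ℤ)).natAbs =
    ((rstLabel k₁ k₂ (eSrc (phi hk₂ e)) : ℤ) -
      (rstLabel k₁ k₂ (eDst (phi hk₂ e)) : ℤ)).natAbs := by
  have hmul : ∀ a b : ℕ, a ≤ b → a * (1 + k₂) ≤ b * (1 + k₂) :=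
    fun a b hab => Nat.mul_le_mul_right _ hab
  rcases e with i | ⟨i, j⟩
  · have hi := i.isLt
    by_cases h : (i : ℕ) = 0
    · rw [phi_inl_zero hk₂ i h]
      simp only [eSrc, eDst]
      rw [gl_root hk₁, gl_mid hk₂, if_pos h]
      simp only [rstLabel, h, Nat.sub_zero, Fin.val_mk]
      have h1 : (1 : ℕ) * (1 + k₂) ≤ k₁ * (1 + k₂) := hmul _ _ hk₁
      omega
    · rw [phi_inl_pos hk₂ i h]
      simp only [eSrc, eDst]
      rw [gl_root hk₁, gl_mid hk₂, if_neg h]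
      simp only [rstLabel]
      have hB : (i : ℕ) * (1 + k₂) + (1 + k₂) ≤ k₁ * (1 + k₂) := by
        have h1 := hmul ((i : ℕ) + 1) k₁ (by omega)
        have h3 : ((i : ℕ) + 1) * (1 + k₂) = (i : ℕ) * (1 + k₂) + 1 * (1 + k₂) := by ring
        omega
      have hA : (k₁ - (i : ℕ)) * (1 + k₂) + (i : ℕ) * (1 + k₂) = k₁ * (1 + k₂) := by
        rw [← Nat.add_mul]
        congr 1
        omega
      omega
  · have hi := i.isLt
    have hj := j.isLt
    have hB : (i : ℕ) * (1 + k₂) + (1 + k₂) ≤ k₁ * (1 + k₂) := by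
      have h1 := hmul ((i : ℕ) + 1) k₁ (by omega)
      have h3 : ((i : ℕ) + 1) * (1 + k₂) = (i : ℕ) * (1 + k₂) + 1 * (1 + k₂) := by ring
      omega
    have hA : (k₁ - (i : ℕ)) * (1 + k₂) + (i : ℕ) * (1 + k₂) = k₁ * (1 + k₂) := by
      rw [← Nat.add_mul]
      congr 1
      omega
    by_cases h : (i : ℕ) = 0
    · by_cases hJ : (j : ℕ) = k₂ - 1
      · rw [phi_inr_zero_last hk₂ i j h hJ]
        simp only [eSrc, eDst]
        rw [gl_mid hk₂, if_pos h, gl_leaf hk₂, if_pos hJ]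
        simp only [rstLabel, h, Nat.sub_zero]
        omega
      · rw [phi_inr_zero_mid hk₂ i j h hJ]
        simp only [eSrc, eDst]
        rw [gl_mid hk₂, if_pos h, gl_leaf hk₂, if_neg hJ]
        simp only [rstLabel, h, Nat.sub_zero]
        all_goals omega
    · by_cases hJ : (j : ℕ) = k₂ - 1
      · rw [phi_inr_pos_last hk₂ i j h hJ]
        simp only [eSrc, eDst]
        rw [gl_mid hk₂, if_neg h, gl_leaf hk₂, if_pos hJ]
        simp only [rstLabel, Fin.val_mk, hJ]
        have hsub : k₁ - (k₁ - (i : ℕ)) = (i : ℕ) := by omega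
        rw [hsub]
        omega
      · rw [phi_inr_pos_mid hk₂ i j h hJ]
        simp only [eSrc, eDst]
        rw [gl_mid hk₂, if_neg h, gl_leaf hk₂, if_neg hJ]
        simp only [rstLabel, Fin.val_mk]
        have hsub : k₁ - (k₁ - (i : ℕ)) = (i : ℕ) := by omega
        rw [hsub]
        omega


/-- Lemma 1: applying the product of transpositions
`(0 k₂)(h₂ h₂+k₂)⋯((k₁-1)h₂ (k₁-1)h₂+k₂)` to the vertex labels of the graceful
labelling `f` of Theorem 1 (which assigns `0` to the root) yields another graceful
labelling of the `(k₁, k₂)` rooted symmetric tree, one that assigns label `0` to a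
vertex at level 3. -/
theorem rst3_swapPerm_graceful (k₁ k₂ : ℕ) (hk₁ : 1 ≤ k₁) (hk₂ : 1 ≤ k₂)
    (hf : IsGraceful (rst3 k₁ k₂) (rstLabel k₁ k₂)) :
    IsGraceful (rst3 k₁ k₂) (fun v => swapPerm k₁ k₂ (rstLabel k₁ k₂ v)) ∧
    ∃ (i : Fin k₁) (j : Fin k₂), swapPerm k₁ k₂ (rstLabel k₁ k₂ (some (i, some j))) = 0 := by
  constructor
  · refine ⟨?_, ?_, ?_⟩
    · intro a b hab
      apply hf.1
      have := congrArg (swapPerm k₁ k₂) hab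
      rwa [swap_invol k₁ k₂ hk₂, swap_invol k₁ k₂ hk₂] at this
    · intro v
      have hcard : Fintype.card (Option (Fin k₁ × Option (Fin k₂))) = 1 + k₁ * (1 + k₂) := by
        simp [Fintype.card_option, Fintype.card_prod]
        ring
      rw [hcard]
      have hmul : ∀ a b : ℕ, a ≤ b → a * (1 + k₂) ≤ b * (1 + k₂) :=
        fun a b hab => Nat.mul_le_mul_right _ hab
      match v with
      | none =>
        show swapPerm k₁ k₂ (rstLabel k₁ k₂ none) < 1 + k₁ * (1 + k₂)
        rw [gl_root hk₁]
        have := hmul 1 k₁ hk₁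
        omega
      | some (i, none) =>
        have hi := i.isLt
        show swapPerm k₁ k₂ (rstLabel k₁ k₂ (some (i, none))) < 1 + k₁ * (1 + k₂)
        rw [gl_mid hk₂]
        split
        · omega
        · have hB : (i : ℕ) * (1 + k₂) + (1 + k₂) ≤ k₁ * (1 + k₂) := by
            have h1 := hmul ((i : ℕ) + 1) k₁ (by omega)
            have h3 : ((i : ℕ) + 1) * (1 + k₂) = (i : ℕ) * (1 + k₂) + 1 * (1 + k₂) := by ring
            omega
          have hA : (k₁ - (i : ℕ)) * (1 + k₂) + (i : ℕ) * (1 + k₂) = k₁ * (1 + k₂) := by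
            rw [← Nat.add_mul]
            congr 1
            omega
          have hC : 1 * (1 + k₂) ≤ (i : ℕ) * (1 + k₂) := hmul 1 _ (by omega)
          omega
      | some (i, some j) =>
        have hi := i.isLt
        have hj := j.isLt
        show swapPerm k₁ k₂ (rstLabel k₁ k₂ (some (i, some j))) < 1 + k₁ * (1 + k₂)
        rw [gl_leaf hk₂]
        have hB : (i : ℕ) * (1 + k₂) + (1 + k₂) ≤ k₁ * (1 + k₂) := by
          have h1 := hmul ((i : ℕ) + 1) k₁ (by omega)
          have h3 : ((i : ℕ) + 1) * (1 + k₂) = (i : ℕ) * (1 + k₂) + 1 * (1 + k₂) := by ring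
          omega
        split <;> omega
    · intro u v u' v' huv hu'v' heq
      obtain ⟨e, hc⟩ := adj_cases huv
      obtain ⟨e', hc'⟩ := adj_cases hu'v'
      have key : ((swapPerm k₁ k₂ (rstLabel k₁ k₂ (eSrc e)) : ℤ) -
          (swapPerm k₁ k₂ (rstLabel k₁ k₂ (eDst e)) : ℤ)).natAbs =
          ((swapPerm k₁ k₂ (rstLabel k₁ k₂ (eSrc e')) : ℤ) -
          (swapPerm k₁ k₂ (rstLabel k₁ k₂ (eDst e')) : ℤ)).natAbs := by
        rcases hc with ⟨rfl, rfl⟩ | ⟨rfl, rfl⟩ <;>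
          rcases hc' with ⟨rfl, rfl⟩ | ⟨rfl, rfl⟩ <;>
          simp only at heq <;> omega
      rw [edge_transfer hk₁ hk₂ e, edge_transfer hk₁ hk₂ e'] at key
      have hsym := hf.2.2 _ _ _ _ (adj_src_dst hk₂ (phi hk₂ e)) (adj_src_dst hk₂ (phi hk₂ e')) key
      have hee : e = e' := by
        have := sym2_inj hsym
        have h2 := congrArg (phi hk₂) this
        rwa [phi_phi, phi_phi] at h2
      subst hee
      rcases hc with ⟨rfl, rfl⟩ | ⟨rfl, rfl⟩ <;>
        rcases hc' with ⟨rfl, rfl⟩ | ⟨rfl, rfl⟩ <;>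
        first | rfl | exact Sym2.eq_swap | exact Sym2.eq_swap.symm
  · refine ⟨⟨0, hk₁⟩, ⟨k₂ - 1, by omega⟩, ?_⟩
    rw [gl_leaf hk₂]
    simp
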